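/- Let f : X ⟶ B and g : Y ⟶ B be maps of types, and let f ⋆_B g : X ⊔_{X ×_B Y} Y ⟶ B denote the fiberwise join, i.e. the map to B induced from the pushout of the two projections X ⟵ X ×_B Y ⟶ Y. Then for every b : B, the canonical map from the join (fib_b f) ⋆ (fib_b g) of the fibers — i.e. the pushout of fib_b f ⟵ (fib_b f) × (fib_b g) ⟶ fib_b g — to the fiber of f ⋆_B g over b is a bijection. -/

import Mathlib

open CategoryTheory Limits

namespace GoodwillieStmt14

universe u

variable {X Y B : Type u} (f : X → B) (g : Y → B)

/-- The fiber product `X ×_B Y`. -/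
def Pb : Type u := {p : X × Y // f p.1 = g p.2}

/-- First projection `X ×_B Y ⟶ X`. -/
def p1 : Pb f g ⟶ X := TypeCat.ofHom fun p => p.1.1

/-- Second projection `X ×_B Y ⟶ Y`. -/
def p2 : Pb f g ⟶ Y := TypeCat.ofHom fun p => p.1.2

/-- The fiberwise join `X ⋆_B Y`: the pushout of the projections `X ⟵ X ×_B Y ⟶ Y`. -/
noncomputable def FJ : Type u := pushout (p1 f g) (p2 f g)

/-- The canonical map `X ⋆_B Y ⟶ B`. -/
noncomputable def fjMap : FJ f g ⟶ B :=
  pushout.desc (TypeCat.ofHom f) (TypeCat.ofHom g) (by ext p; exact p.2)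

lemma fjMap_inl (x : X) :
    fjMap f g (pushout.inl (p1 f g) (p2 f g) x) = f x := by
  change (pushout.inl (p1 f g) (p2 f g) ≫ pushout.desc (TypeCat.ofHom f) (TypeCat.ofHom g) _) x = f x
  rw [pushout.inl_desc]; rfl

lemma fjMap_inr (y : Y) :
    fjMap f g (pushout.inr (p1 f g) (p2 f g) y) = g y := by
  change (pushout.inr (p1 f g) (p2 f g) ≫ pushout.desc (TypeCat.ofHom f) (TypeCat.ofHom g) _) y = g y
  rw [pushout.inr_desc]; rfl

lemma inl_eq_inr (p : Pb f g) :
    pushout.inl (p1 f g) (p2 f g) p.1.1 = pushout.inr (p1 f g) (p2 f g) p.1.2 := by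
  change (p1 f g ≫ pushout.inl (p1 f g) (p2 f g)) p =
    (p2 f g ≫ pushout.inr (p1 f g) (p2 f g)) p
  rw [pushout.condition]

/-- The fiber of a map of types over a point. -/
def Fib {W : Type u} (h : W → B) (b : B) : Type u := {w : W // h w = b}

/-- The join `S ⋆ T` of the fibers `S = fib_b f`, `T = fib_b g`: the pushout of the two
product projections `S ⟵ S × T ⟶ T`. -/
noncomputable def JoinFib (b : B) : Type u :=
  pushout (show (Fib f b × Fib g b) ⟶ Fib f b from TypeCat.ofHom Prod.fst)
    (show (Fib f b × Fib g b) ⟶ Fib g b from TypeCat.ofHom Prod.snd)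

/-- The canonical map from the join of the fibers to the fiber of the fiberwise join. -/
noncomputable def jmap (b : B) : JoinFib f g b ⟶ Fib (fjMap f g) b :=
  pushout.desc
    (TypeCat.ofHom fun x => ⟨pushout.inl (p1 f g) (p2 f g) x.1, by rw [fjMap_inl]; exact x.2⟩)
    (TypeCat.ofHom fun y => ⟨pushout.inr (p1 f g) (p2 f g) y.1, by rw [fjMap_inr]; exact y.2⟩)
    (by
      ext p
      apply Subtype.ext
      exact inl_eq_inr f g ⟨(p.1.1, p.2.1), p.1.2.trans p.2.2.symm⟩)

abbrev Model : Type u := Types.Pushout (p1 f g) (p2 f g)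

def Hq : Model f g → B :=
  Quot.lift (Sum.elim f g) (by rintro _ _ ⟨s⟩; exact s.2)

noncomputable def e : FJ f g ≅ Model f g :=
  (pushoutIsPushout (p1 f g) (p2 f g)).coconePointUniqueUpToIso
    (Types.Pushout.isColimitCocone (p1 f g) (p2 f g))

lemma e_inl (x : X) : (e f g).hom (pushout.inl (p1 f g) (p2 f g) x) = Quot.mk _ (Sum.inl x) :=
  types_congr_hom ((pushoutIsPushout (p1 f g) (p2 f g)).comp_coconePointUniqueUpToIso_hom
    (Types.Pushout.isColimitCocone (p1 f g) (p2 f g)) WalkingSpan.left) x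

lemma e_inr (y : Y) : (e f g).hom (pushout.inr (p1 f g) (p2 f g) y) = Quot.mk _ (Sum.inr y) :=
  types_congr_hom ((pushoutIsPushout (p1 f g) (p2 f g)).comp_coconePointUniqueUpToIso_hom
    (Types.Pushout.isColimitCocone (p1 f g) (p2 f g)) WalkingSpan.right) y

lemma Hq_e : ∀ z, Hq f g ((e f g).hom z) = fjMap f g z := by
  intro z
  have : (e f g).hom ≫ TypeCat.ofHom (Hq f g) = fjMap f g := by
    apply pushout.hom_ext
    · ext x
      show Hq f g ((e f g).hom (pushout.inl (p1 f g) (p2 f g) x)) = fjMap f g (pushout.inl (p1 f g) (p2 f g) x)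
      rw [e_inl]
      change f x = (pushout.inl (p1 f g) (p2 f g) ≫ pushout.desc (TypeCat.ofHom f) (TypeCat.ofHom g) _) x
      rw [pushout.inl_desc]; rfl
    · ext y
      show Hq f g ((e f g).hom (pushout.inr (p1 f g) (p2 f g) y)) = fjMap f g (pushout.inr (p1 f g) (p2 f g) y)
      rw [e_inr]
      change g y = (pushout.inr (p1 f g) (p2 f g) ≫ pushout.desc (TypeCat.ofHom f) (TypeCat.ofHom g) _) y
      rw [pushout.inr_desc]; rfl
  exact types_congr_hom this z


-- inverse on the model, dependent elimination
noncomputable def inv0 (b : B) : (z : Model f g) → Hq f g z = b → JoinFib f g b :=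
  Quot.rec
    (fun w => match w with
      | Sum.inl x => fun h => pushout.inl (show (Fib f b × Fib g b) ⟶ Fib f b from TypeCat.ofHom Prod.fst)
          (show (Fib f b × Fib g b) ⟶ Fib g b from TypeCat.ofHom Prod.snd) (⟨x, h⟩ : Fib f b)
      | Sum.inr y => fun h => pushout.inr (show (Fib f b × Fib g b) ⟶ Fib f b from TypeCat.ofHom Prod.fst)
          (show (Fib f b × Fib g b) ⟶ Fib g b from TypeCat.ofHom Prod.snd) (⟨y, h⟩ : Fib g b))
    (by
      rintro _ _ ⟨s⟩
      apply eq_of_heq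
      refine HEq.trans (eqRec_heq_self _ _) ?_
      have hd : (f (p1 f g s) = b) = (g (p2 f g s) = b) := by rw [show f (p1 f g s) = g (p2 f g s) from s.2]
      refine Function.hfunext hd ?_
      intro h h' _
      apply heq_of_eq
      exact types_congr_hom (pushout.condition
        (f := (show (Fib f b × Fib g b) ⟶ Fib f b from TypeCat.ofHom Prod.fst))
        (g := (show (Fib f b × Fib g b) ⟶ Fib g b from TypeCat.ofHom Prod.snd)))
        (⟨⟨p1 f g s, h⟩, ⟨p2 f g s, h'⟩⟩ : Fib f b × Fib g b))


noncomputable def jinl (b : B) : Fib f b → JoinFib f g b :=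
  fun x => pushout.inl (show (Fib f b × Fib g b) ⟶ Fib f b from TypeCat.ofHom Prod.fst)
    (show (Fib f b × Fib g b) ⟶ Fib g b from TypeCat.ofHom Prod.snd) x

noncomputable def jinr (b : B) : Fib g b → JoinFib f g b :=
  fun y => pushout.inr (show (Fib f b × Fib g b) ⟶ Fib f b from TypeCat.ofHom Prod.fst)
    (show (Fib f b × Fib g b) ⟶ Fib g b from TypeCat.ofHom Prod.snd) y


noncomputable def jmap' (b : B) : JoinFib f g b ⟶ Fib (Hq f g) b :=
  pushout.desc
    (TypeCat.ofHom fun x => (⟨Quot.mk _ (Sum.inl x.1), x.2⟩ : Fib (Hq f g) b))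
    (TypeCat.ofHom fun y => (⟨Quot.mk _ (Sum.inr y.1), y.2⟩ : Fib (Hq f g) b))
    (by
      ext p
      apply Subtype.ext
      exact Quot.sound (Types.Pushout.Rel.inl_inr (f := p1 f g) (g := p2 f g) (⟨(p.1.1, p.2.1), p.1.2.trans p.2.2.symm⟩ : Pb f g)))

noncomputable def invMap' (b : B) : Fib (Hq f g) b → JoinFib f g b :=
  fun m => inv0 f g b m.1 m.2

lemma jmap'_jinl (b : B) (x : Fib f b) :
    jmap' f g b (jinl f g b x) = ⟨Quot.mk _ (Sum.inl x.1), x.2⟩ := by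
  have h : pushout.inl (show (Fib f b × Fib g b) ⟶ Fib f b from TypeCat.ofHom Prod.fst)
      (show (Fib f b × Fib g b) ⟶ Fib g b from TypeCat.ofHom Prod.snd) ≫ jmap' f g b =
      TypeCat.ofHom (fun x => (⟨Quot.mk _ (Sum.inl x.1), x.2⟩ : Fib (Hq f g) b)) := by
    unfold jmap'; exact pushout.inl_desc _ _ _
  exact types_congr_hom h x

lemma jmap'_jinr (b : B) (y : Fib g b) :
    jmap' f g b (jinr f g b y) = ⟨Quot.mk _ (Sum.inr y.1), y.2⟩ := by
  have h : pushout.inr (show (Fib f b × Fib g b) ⟶ Fib f b from TypeCat.ofHom Prod.fst)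
      (show (Fib f b × Fib g b) ⟶ Fib g b from TypeCat.ofHom Prod.snd) ≫ jmap' f g b =
      TypeCat.ofHom (fun y => (⟨Quot.mk _ (Sum.inr y.1), y.2⟩ : Fib (Hq f g) b)) := by
    unfold jmap'; exact pushout.inr_desc _ _ _
  exact types_congr_hom h y

lemma jmap_jinl (b : B) (x : Fib f b) :
    jmap f g b (jinl f g b x) =
      ⟨pushout.inl (p1 f g) (p2 f g) x.1, by rw [fjMap_inl]; exact x.2⟩ := by
  have h : pushout.inl (show (Fib f b × Fib g b) ⟶ Fib f b from TypeCat.ofHom Prod.fst)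
      (show (Fib f b × Fib g b) ⟶ Fib g b from TypeCat.ofHom Prod.snd) ≫ jmap f g b =
      TypeCat.ofHom (fun x => (⟨pushout.inl (p1 f g) (p2 f g) x.1,
        by rw [fjMap_inl]; exact x.2⟩ : Fib (fjMap f g) b)) := by
    unfold jmap; exact pushout.inl_desc _ _ _
  exact (types_congr_hom h x).trans (Subtype.ext rfl)

lemma jmap_jinr (b : B) (y : Fib g b) :
    jmap f g b (jinr f g b y) =
      ⟨pushout.inr (p1 f g) (p2 f g) y.1, by rw [fjMap_inr]; exact y.2⟩ := by
  have h : pushout.inr (show (Fib f b × Fib g b) ⟶ Fib f b from TypeCat.ofHom Prod.fst)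
      (show (Fib f b × Fib g b) ⟶ Fib g b from TypeCat.ofHom Prod.snd) ≫ jmap f g b =
      TypeCat.ofHom (fun y => (⟨pushout.inr (p1 f g) (p2 f g) y.1,
        by rw [fjMap_inr]; exact y.2⟩ : Fib (fjMap f g) b)) := by
    unfold jmap; exact pushout.inr_desc _ _ _
  exact (types_congr_hom h y).trans (Subtype.ext rfl)

lemma left_inv' (b : B) : ∀ j, invMap' f g b (jmap' f g b j) = j := by
  intro j
  have : jmap' f g b ≫ (TypeCat.ofHom (invMap' f g b) : Fib (Hq f g) b ⟶ JoinFib f g b) = 𝟙 _ := by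
    apply pushout.hom_ext
    · ext x
      show invMap' f g b (jmap' f g b (jinl f g b x)) = jinl f g b x
      rw [jmap'_jinl]
      rfl
    · ext y
      show invMap' f g b (jmap' f g b (jinr f g b y)) = jinr f g b y
      rw [jmap'_jinr]
      rfl
  exact types_congr_hom this j

lemma right_inv' (b : B) : ∀ m, jmap' f g b (invMap' f g b m) = m := by
  rintro ⟨m, hm⟩
  induction m using Quot.ind with
  | _ w =>
    cases w with
    | inl x =>
      show jmap' f g b (jinl f g b ⟨x, hm⟩) = _
      exact jmap'_jinl f g b ⟨x, hm⟩
    | inr y =>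
      show jmap' f g b (jinr f g b ⟨y, hm⟩) = _
      exact jmap'_jinr f g b ⟨y, hm⟩

noncomputable def fibEquiv (b : B) : Fib (Hq f g) b ≃ Fib (fjMap f g) b where
  toFun m := ⟨(e f g).inv m.1, by
    rw [← Hq_e, show (e f g).hom ((e f g).inv m.1) = m.1 from types_congr_hom (e f g).inv_hom_id m.1]
    exact m.2⟩
  invFun z := ⟨(e f g).hom z.1, by rw [Hq_e]; exact z.2⟩
  left_inv m := Subtype.ext (types_congr_hom (e f g).inv_hom_id m.1)
  right_inv z := Subtype.ext (types_congr_hom (e f g).hom_inv_id z.1)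

lemma jmap_eq (b : B) :
    jmap f g b = jmap' f g b ≫ (TypeCat.ofHom (fun m => fibEquiv f g b m) : Fib (Hq f g) b ⟶ Fib (fjMap f g) b) := by
  apply pushout.hom_ext
  · ext x
    show jmap f g b (jinl f g b x) = fibEquiv f g b (jmap' f g b (jinl f g b x))
    rw [jmap_jinl, jmap'_jinl]
    apply Subtype.ext
    show pushout.inl (p1 f g) (p2 f g) x.1 = (e f g).inv (Quot.mk _ (Sum.inl x.1))
    rw [← e_inl f g x.1]
    exact (types_congr_hom (e f g).hom_inv_id _).symm
  · ext y
    show jmap f g b (jinr f g b y) = fibEquiv f g b (jmap' f g b (jinr f g b y))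
    rw [jmap_jinr, jmap'_jinr]
    apply Subtype.ext
    show pushout.inr (p1 f g) (p2 f g) y.1 = (e f g).inv (Quot.mk _ (Sum.inr y.1))
    rw [← e_inr f g y.1]
    exact (types_congr_hom (e f g).hom_inv_id _).symm

/-- For maps of types `f : X ⟶ B` and `g : Y ⟶ B`, and every `b : B`,
the canonical map from the join `(fib_b f) ⋆ (fib_b g)` of the fibers to the fiber of the
fiberwise join `f ⋆_B g : X ⊔_{X ×_B Y} Y ⟶ B` over `b` is a bijection. -/
theorem goodwillie_stmt_14 (b : B) : Function.Bijective (jmap f g b) := by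
  rw [jmap_eq]
  exact (fibEquiv f g b).bijective.comp
    ((Function.bijective_iff_has_inverse).2
      ⟨invMap' f g b, left_inv' f g b, right_inv' f g b⟩)

end GoodwillieStmt14
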